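/- Suppose F∞ = 0. Let h_max > H₀, set c̄ = √(g·h_max + h_max·(h_max + 2H₀)·E∞/H₀³), and let c = c̄ or c = −c̄. If c·(c·H₀² − v♯∞·h_max²) < 0, then there exists no profile of maximal height h_max and speed c; that is, no C² function h : ℝ → ℝ with h > 0, solving the profile ODE on ℝ, tending to H₀ with h' tending to 0 at ±∞, and with supremum h_max attained at some point. -/

import Mathlib

open Filter Set

/-- Nonexistence of a solitary wave of maximal height `hmax` and
speed `c = ±c̄` when `c·(c·H₀² − v♯∞·hmax²) < 0` (case `F∞ = 0`). -/
theorem nonexistence_of_solitary_wave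
    (g H₀ vs Einf hmax c : ℝ) (hg : 0 < g) (hH : 0 < H₀) (hE : 0 < Einf)
    (hmax_gt : H₀ < hmax)
    (hc : c = Real.sqrt (g * hmax + hmax * (hmax + 2 * H₀) * Einf / H₀ ^ 3) ∨
          c = -Real.sqrt (g * hmax + hmax * (hmax + 2 * H₀) * Einf / H₀ ^ 3))
    (hcrit : c * (c * H₀ ^ 2 - vs * hmax ^ 2) < 0) :
    ¬ ∃ h : ℝ → ℝ, ContDiff ℝ 2 h ∧ (∀ x, 0 < h x) ∧
      (∀ x, (1/3) * c * (c * H₀ ^ 2 - vs * (h x) ^ 2) * deriv (deriv h) x =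
        ((h x - H₀) / (2 * h x)) * (2 * c ^ 2 * H₀ - g * h x * (h x + H₀))
          - ((h x) ^ 3 / H₀ ^ 3 - 1) * Einf
          + (c ^ 2 / 3) * H₀ ^ 2 * (deriv h x) ^ 2 / h x) ∧
      Tendsto h atTop (nhds H₀) ∧ Tendsto h atBot (nhds H₀) ∧
      Tendsto (deriv h) atTop (nhds 0) ∧ Tendsto (deriv h) atBot (nhds 0) ∧
      (∀ x, h x ≤ hmax) ∧ (∃ x, h x = hmax) := by
  rintro ⟨h, hC2, hpos, hode, -, -, -, -, hle, x₀, hx₀⟩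
  have hm : (0:ℝ) < hmax := lt_trans hH hmax_gt
  -- c² value
  have harg : 0 ≤ g * hmax + hmax * (hmax + 2 * H₀) * Einf / H₀ ^ 3 := by positivity
  have hc2 : c ^ 2 = g * hmax + hmax * (hmax + 2 * H₀) * Einf / H₀ ^ 3 := by
    rcases hc with rfl | rfl
    · exact Real.sq_sqrt harg
    · rw [neg_pow]; simp [Real.sq_sqrt harg]
  -- regularity
  have hC1d : ContDiff ℝ 1 (deriv h) :=
    (contDiff_succ_iff_deriv.mp (show ContDiff ℝ (1+1) h by norm_num [hC2])).2.2
  have hdiff : Differentiable ℝ h := hC2.differentiable two_ne_zero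
  -- local max facts
  have hloc : IsLocalMax h x₀ := Filter.Eventually.of_forall fun y => hx₀ ▸ hle y
  have hd1 : deriv h x₀ = 0 := hloc.deriv_eq_zero
  have hd2 : deriv (deriv h) x₀ ≤ 0 := by
    by_contra hp
    push_neg at hp
    have hdd : HasDerivAt (deriv h) (deriv (deriv h) x₀) x₀ :=
      ((hC1d.differentiable one_ne_zero) x₀).hasDerivAt
    have hslope := hasDerivAt_iff_tendsto_slope.mp hdd
    have hev : ∀ᶠ y in nhdsWithin x₀ {x₀}ᶜ, 0 < slope (deriv h) x₀ y :=
      hslope.eventually (eventually_gt_nhds hp)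
    rw [eventually_nhdsWithin_iff, Metric.eventually_nhds_iff] at hev
    obtain ⟨ε, hε, hball⟩ := hev
    -- deriv h > 0 on (x₀, x₀ + ε)
    have hpos' : ∀ y ∈ Ioo x₀ (x₀ + ε), 0 < deriv h y := by
      intro y hy
      have hne : y ≠ x₀ := ne_of_gt hy.1
      have hd : dist y x₀ < ε := by
        rw [Real.dist_eq, abs_of_pos (by linarith [hy.1])]
        linarith [hy.2]
      have := hball hd hne
      rw [slope_def_field, hd1] at this
      have hyx : 0 < y - x₀ := by linarith [hy.1]
      have : 0 < (deriv h y - 0) / (y - x₀) := this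
      have := (div_pos_iff.mp this)
      rcases this with ⟨h1, _⟩ | ⟨_, h2⟩
      · linarith
      · linarith
    have hmono : StrictMonoOn h (Icc x₀ (x₀ + ε/2)) := by
      apply strictMonoOn_of_deriv_pos (convex_Icc _ _) (hdiff.continuous.continuousOn)
      intro y hy
      rw [interior_Icc] at hy
      exact hpos' y ⟨hy.1, by linarith [hy.2]⟩
    have : h x₀ < h (x₀ + ε/2) :=
      hmono (left_mem_Icc.mpr (by linarith)) (right_mem_Icc.mpr (by linarith)) (by linarith)
    have := hle (x₀ + ε/2)
    linarith [hx₀ ▸ this]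
  -- plug into ODE
  have heq := hode x₀
  rw [hx₀, hd1] at heq
  -- LHS ≥ 0
  have hK : 0 ≤ (1/3) * c * (c * H₀ ^ 2 - vs * hmax ^ 2) * deriv (deriv h) x₀ := by
    nlinarith [mul_nonneg (neg_nonneg.mpr hcrit.le) (neg_nonneg.mpr hd2)]
  -- RHS < 0
  have hRHS : ((hmax - H₀) / (2 * hmax)) * (2 * c ^ 2 * H₀ - g * hmax * (hmax + H₀))
          - (hmax ^ 3 / H₀ ^ 3 - 1) * Einf
          + c ^ 2 / 3 * H₀ ^ 2 * 0 ^ 2 / hmax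
      = -(g * (hmax - H₀)^2 / 2) - (hmax - H₀)^2 * (hmax + H₀) * Einf / H₀ ^ 3 := by
    rw [hc2]
    field_simp
    ring
  rw [hRHS] at heq
  have : (0:ℝ) < g * (hmax - H₀)^2 / 2 + (hmax - H₀)^2 * (hmax + H₀) * Einf / H₀ ^ 3 := by
    have : (0:ℝ) < hmax - H₀ := by linarith
    positivity
  linarith [hK, heq.symm.le]
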